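/- Let v be an element of GF(2^{nk}) not in GF(2^k), write v_i = v^{2^{ik}}, and set V = v_0^{2^{2k}+1} / (v_0 + v_1)^{2^k+1}. Then for every i with 2 ≤ i ≤ n+1, B_i(V) = (∑_{j=1}^{i} v_j) / (v_1 + v_2) · ∏_{j=2}^{i-1} (v_0/(v_0+v_1))^{2^{jk}}, where the empty product equals 1. -/

import Mathlib

open Finset

/-- The polynomials `B_i` from the paper. -/
def B {F : Type*} [Field F] (k : ℕ) (x : F) : ℕ → F
  | 0 => 1
  | 1 => 1
  | 2 => 1
  | i + 3 => B k x (i + 2) + x ^ (2 ^ ((i + 1) * k)) * B k x (i + 1)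

theorem aux_stmt1 {F : Type*} [Field F] (h2 : (2:F) = 0) (k : ℕ) (V : F) (f g : ℕ → F)
    (hfne : ∀ j, f j ≠ 0) (hdne : ∀ j, f j + f (j+1) ≠ 0)
    (hV : ∀ j, V ^ 2 ^ (j*k) = f j * f (j+2) / ((f j + f (j+1)) * (f (j+1) + f (j+2))))
    (hg : ∀ j, g j = f j / (f j + f (j+1))) :
    ∀ i, 2 ≤ i → B k V i =
      (∑ j ∈ Finset.Icc 1 i, f j) / (f 1 + f 2) * ∏ j ∈ Finset.Icc 2 (i-1), g j := by
  have he : f 1 + f 2 ≠ 0 := hdne 1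
  have hBrec : ∀ t, B k V (t+3) = B k V (t+2) + V ^ 2 ^ ((t+1)*k) * B k V (t+1) :=
    fun t => by rw [B]
  have hsum2 : ∑ j ∈ Finset.Icc 1 2, f j = f 1 + f 2 := by
    rw [show (2:ℕ) = 1+1 from rfl, Finset.sum_Icc_succ_top (by omega), Finset.Icc_self,
      Finset.sum_singleton]
  have main : ∀ m : ℕ,
      (B k V (m+2) = (∑ j ∈ Finset.Icc 1 (m+2), f j) / (f 1 + f 2) * ∏ j ∈ Finset.Icc 2 (m+1), g j)
      ∧ (B k V (m+3) = (∑ j ∈ Finset.Icc 1 (m+3), f j) / (f 1 + f 2) * ∏ j ∈ Finset.Icc 2 (m+2), g j) := by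
    intro m
    induction m with
    | zero =>
      constructor
      · show B k V 2 = _
        rw [hsum2, Finset.Icc_eq_empty (by omega), Finset.prod_empty, mul_one, div_self he]
        rfl
      · show B k V 3 = _
        have h3 : B k V 3 = B k V 2 + V ^ 2 ^ (1*k) * B k V 1 := hBrec 0
        have hb2 : B k V 2 = 1 := rfl
        have hb1 : B k V 1 = 1 := rfl
        have hV1 : V ^ 2 ^ (1*k) = f 1 * f 3 / ((f 1 + f 2) * (f 2 + f 3)) := hV 1
        have hs3 : (∑ j ∈ Finset.Icc 1 3, f j) = (∑ j ∈ Finset.Icc 1 2, f j) + f 3 :=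
          Finset.sum_Icc_succ_top (by omega) f
        have hp : (∏ j ∈ Finset.Icc 2 2, g j) = g 2 := by
          rw [Finset.Icc_self, Finset.prod_singleton]
        have hd23 : f 2 + f 3 ≠ 0 := hdne 2
        rw [h3, hb2, hb1, hV1, hs3, hsum2, hp, hg 2]
        have hg2 : f 2 / (f 2 + f 3) = f 2 / (f 2 + f 3) := rfl
        show 1 + f 1 * f 3 / ((f 1 + f 2) * (f 2 + f 3)) * 1
            = (f 1 + f 2 + f 3) / (f 1 + f 2) * (f 2 / (f 2 + f 3))
        field_simp
        linear_combination (f 1 * f 3) * h2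
    | succ m ih =>
      refine ⟨ih.2, ?_⟩
      show B k V (m+4) = (∑ j ∈ Finset.Icc 1 (m+4), f j) / (f 1 + f 2) * ∏ j ∈ Finset.Icc 2 (m+3), g j
      have hstep : B k V (m+4) = B k V (m+3) + V ^ 2 ^ ((m+2)*k) * B k V (m+2) := hBrec (m+1)
      have hs1 : (∑ j ∈ Finset.Icc 1 (m+4), f j) = (∑ j ∈ Finset.Icc 1 (m+3), f j) + f (m+4) :=
        Finset.sum_Icc_succ_top (by omega) f
      have hs2 : (∑ j ∈ Finset.Icc 1 (m+3), f j) = (∑ j ∈ Finset.Icc 1 (m+2), f j) + f (m+3) :=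
        Finset.sum_Icc_succ_top (by omega) f
      have hp1 : (∏ j ∈ Finset.Icc 2 (m+3), g j) = (∏ j ∈ Finset.Icc 2 (m+2), g j) * g (m+3) :=
        Finset.prod_Icc_succ_top (by omega) g
      have hp2 : (∏ j ∈ Finset.Icc 2 (m+2), g j) = (∏ j ∈ Finset.Icc 2 (m+1), g j) * g (m+2) :=
        Finset.prod_Icc_succ_top (by omega) g
      have hVm : V ^ 2 ^ ((m+2)*k)
          = f (m+2) * f (m+4) / ((f (m+2) + f (m+3)) * (f (m+3) + f (m+4))) := hV (m+2)
      have hg2 : g (m+2) = f (m+2) / (f (m+2) + f (m+3)) := hg (m+2)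
      have hg3 : g (m+3) = f (m+3) / (f (m+3) + f (m+4)) := hg (m+3)
      have hdxy : f (m+2) + f (m+3) ≠ 0 := hdne (m+2)
      have hdyz : f (m+3) + f (m+4) ≠ 0 := hdne (m+3)
      rw [hstep, ih.1, ih.2, hVm, hs1, hs2, hp1, hp2, hg2, hg3]
      set S := ∑ j ∈ Finset.Icc 1 (m+2), f j with hS
      set P := ∏ j ∈ Finset.Icc 2 (m+1), g j with hP
      set x := f (m+2) with hx
      set y := f (m+3) with hy
      set z := f (m+4) with hz
      set e := f 1 + f 2 with hee
      field_simp
      linear_combination (P * x * S * z) * h2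
  intro i hi
  obtain ⟨m, rfl⟩ : ∃ m, i = m + 2 := ⟨i - 2, by omega⟩
  exact (main m).1

theorem stmt1 (n k : ℕ) (hn : 2 ≤ n) (hk : 1 ≤ k)
    (F : Type*) [Field F] [Fintype F] (hF : Fintype.card F = 2 ^ (n * k))
    (v : F) (hv : v ^ (2 ^ k) ≠ v) :
    ∀ i : ℕ, 2 ≤ i → i ≤ n + 1 →
      B k (v ^ (2 ^ (2 * k) + 1) / (v + v ^ (2 ^ k)) ^ (2 ^ k + 1)) i =
        (∑ j ∈ Finset.Icc 1 i, v ^ (2 ^ (j * k))) / (v ^ (2 ^ k) + v ^ (2 ^ (2 * k))) *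
          ∏ j ∈ Finset.Icc 2 (i - 1), (v / (v + v ^ (2 ^ k))) ^ (2 ^ (j * k)) := by
  -- characteristic 2
  obtain ⟨p, hpc⟩ := CharP.exists F
  haveI := hpc
  obtain ⟨mm, hpp, hcard⟩ := FiniteField.card F p
  have hp2 : p = 2 := by
    have hdvd : p ∣ 2 ^ (n * k) := by
      rw [← hF, hcard]
      exact dvd_pow_self p (Nat.pos_iff_ne_zero.mp mm.pos)
    exact (Nat.prime_dvd_prime_iff_eq hpp Nat.prime_two).mp (hpp.dvd_of_dvd_pow hdvd)
  subst hp2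
  haveI : Fact (Nat.Prime 2) := ⟨hpp⟩
  have h2 : (2 : F) = 0 := by exact_mod_cast CharP.cast_eq_zero F 2
  have hvne : v ≠ 0 := by
    intro h; apply hv; simp [h]
  have hD : v + v ^ 2 ^ k ≠ 0 := by
    intro h
    apply hv
    have h' : v ^ 2 ^ k = -v := by linear_combination h
    rw [h', CharTwo.neg_eq]
  have hDpow : ∀ t : ℕ, (v + v ^ 2 ^ k) ^ 2 ^ (t*k) = v ^ 2 ^ (t*k) + v ^ 2 ^ ((t+1)*k) := by
    intro t
    rw [add_pow_char_pow]
    congr 1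
    rw [← pow_mul, ← pow_add]
    congr 2
    ring
  have hf0 : ∀ j : ℕ, v ^ (2:ℕ) ^ (j*k) ≠ 0 := fun j => pow_ne_zero _ hvne
  have hd : ∀ j : ℕ, v ^ 2 ^ (j*k) + v ^ 2 ^ ((j+1)*k) ≠ 0 := by
    intro j
    rw [← hDpow j]
    exact pow_ne_zero _ hD
  have hgj : ∀ j : ℕ, (v / (v + v ^ 2 ^ k)) ^ 2 ^ (j*k)
      = v ^ 2 ^ (j*k) / (v ^ 2 ^ (j*k) + v ^ 2 ^ ((j+1)*k)) := by
    intro j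
    rw [div_pow, hDpow j]
  have hVj : ∀ j : ℕ, (v ^ (2 ^ (2*k) + 1) / (v + v ^ 2 ^ k) ^ (2 ^ k + 1)) ^ 2 ^ (j*k)
      = v ^ 2 ^ (j*k) * v ^ 2 ^ ((j+2)*k)
        / ((v ^ 2 ^ (j*k) + v ^ 2 ^ ((j+1)*k)) * (v ^ 2 ^ ((j+1)*k) + v ^ 2 ^ ((j+2)*k))) := by
    intro j
    rw [div_pow, ← pow_mul, ← pow_mul]
    have e1 : (2 ^ (2*k) + 1) * 2 ^ (j*k) = 2 ^ ((j+2)*k) + 2 ^ (j*k) := by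
      have h' : 2*k + j*k = (j+2)*k := by ring
      rw [add_mul, one_mul, ← pow_add, h']
    have e2 : (2 ^ k + 1) * 2 ^ (j*k) = 2 ^ ((j+1)*k) + 2 ^ (j*k) := by
      have h' : k + j*k = (j+1)*k := by ring
      rw [add_mul, one_mul, ← pow_add, h']
    have hD1 : (v + v ^ 2 ^ k) ^ 2 ^ ((j+1)*k) = v ^ 2 ^ ((j+1)*k) + v ^ 2 ^ ((j+2)*k) :=
      hDpow (j+1)
    rw [e1, e2, pow_add, pow_add, hD1, hDpow j]
    ring
  intro i hi1 hi2
  have := aux_stmt1 h2 k _ (fun j => v ^ 2 ^ (j*k)) (fun j => (v / (v + v ^ 2 ^ k)) ^ 2 ^ (j*k))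
    hf0 hd hVj hgj i hi1
  rw [this]
  simp only [one_mul]
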